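/- arXiv:0901.0856 — 2 statements merged into one kernel-verified Lean document; each statement's English description precedes it below -/
import Mathlib

section
/- Let r ∈ ℓ²(ℤ) be nonnegative, with tail norms E_m(r) = (Σ_{|j|≥m} r(j)²)^{1/2}. For every integer n with |n| ≥ 1 and complex λ with |λ - n| = 1/2, Σ_{i∈ℤ} Σ_{k∈ℤ} r(i+k)²/(|λ-i||λ-k|) ≤ C(‖r‖²/√|n| + E_{|n|}(r)²) for some absolute constant C. -/
open Finset

lemma nat_tail_sum (m : ℕ) (hm : 1 ≤ m) (N : ℕ) :
    ∑ k ∈ range N, (if m ≤ k then ((k : ℝ) ^ 2)⁻¹ else 0) ≤ 2 / m := by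
  rw [← Finset.sum_filter]
  have hsub : (range N).filter (fun k => m ≤ k) ⊆ Ioo (m - 1) N := by
    intro k hk
    simp only [mem_filter, mem_range, mem_Ioo] at *
    omega
  calc ∑ k ∈ (range N).filter (fun k => m ≤ k), ((k : ℝ) ^ 2)⁻¹
      ≤ ∑ k ∈ Ioo (m - 1) N, ((k : ℝ) ^ 2)⁻¹ := by
        apply Finset.sum_le_sum_of_subset_of_nonneg hsub
        intro i _ _; positivity
    _ ≤ 2 / ((m - 1 : ℕ) + 1) := sum_Ioo_inv_sq_le _ _
    _ = 2 / m := by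
        congr 1
        have : ((m - 1 : ℕ) : ℝ) = (m : ℝ) - 1 := by
          push_cast [Nat.cast_sub hm]; ring
        rw [this]; ring

lemma int_tsum_bound (g : ℤ → ℝ) (c : ℝ) (hg : ∀ j, 0 ≤ g j)
    (h1 : ∀ N : ℕ, ∑ k ∈ range N, g k ≤ c)
    (h2 : ∀ N : ℕ, ∑ k ∈ range N, g (-(k + 1)) ≤ c) :
    Summable g ∧ ∑' j, g j ≤ 2 * c := by
  have s1 : Summable (fun k : ℕ => g k) := summable_of_sum_range_le (fun k => hg _) h1
  have s2 : Summable (fun k : ℕ => g (-(k + 1))) := summable_of_sum_range_le (fun k => hg _) h2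
  have hs : HasSum g ((∑' k : ℕ, g k) + ∑' k : ℕ, g (-(k + 1))) :=
    HasSum.of_nat_of_neg_add_one s1.hasSum s2.hasSum
  refine ⟨hs.summable, ?_⟩
  rw [hs.tsum_eq]
  have t1 : (∑' k : ℕ, g k) ≤ c := Real.tsum_le_of_sum_range_le (fun k => hg _) h1
  have t2 : (∑' k : ℕ, g (-(k + 1))) ≤ c := Real.tsum_le_of_sum_range_le (fun k => hg _) h2
  linarith

noncomputable def bb (j : ℤ) : ℝ := (((max 1 |j| : ℤ) : ℝ))⁻¹

lemma bb_nonneg (j : ℤ) : 0 ≤ bb j := by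
  unfold bb
  have : (1 : ℤ) ≤ max 1 |j| := le_max_left _ _
  positivity

lemma bb_le_one (j : ℤ) : bb j ≤ 1 := by
  unfold bb
  have h : (1 : ℝ) ≤ ((max 1 |j| : ℤ) : ℝ) := by exact_mod_cast le_max_left 1 |j|
  rw [inv_le_one_iff₀]; right; exact h

lemma bb_zero : bb 0 = 1 := by unfold bb; norm_num

lemma bb_of_ne (j : ℤ) (hj : j ≠ 0) : bb j = ((|j| : ℤ) : ℝ)⁻¹ := by
  unfold bb
  have : max 1 |j| = |j| := max_eq_right (abs_pos.mpr hj)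
  rw [this]

lemma bb_sq_nat (k : ℕ) (hk : 1 ≤ k) : bb (k : ℤ) ^ 2 = ((k : ℝ) ^ 2)⁻¹ := by
  rw [bb_of_ne _ (by positivity)]
  have : |(k : ℤ)| = (k : ℤ) := abs_of_nonneg (by positivity)
  rw [this]
  push_cast
  rw [← inv_pow]

lemma bb_sq_neg (k : ℕ) : bb (-((k : ℤ) + 1)) ^ 2 = (((k : ℝ) + 1) ^ 2)⁻¹ := by
  rw [bb_of_ne _ (by omega)]
  have : |(-((k : ℤ) + 1))| = (k : ℤ) + 1 := by
    rw [abs_neg]; exact abs_of_nonneg (by positivity)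
  rw [this]
  push_cast
  rw [← inv_pow]

lemma bb_tail (T : ℤ) (hT : 1 ≤ T) :
    Summable (fun j : ℤ => if T ≤ |j| then bb j ^ 2 else 0) ∧
      ∑' j : ℤ, (if T ≤ |j| then bb j ^ 2 else 0) ≤ 4 / T := by
  set m : ℕ := T.toNat with hmdef
  have hm : 1 ≤ m := by omega
  have hmT : (m : ℝ) = (T : ℝ) := by
    have : (m : ℤ) = T := by omega
    exact_mod_cast congrArg (fun x : ℤ => (x : ℝ)) this
  have hnn : ∀ j : ℤ, 0 ≤ (if T ≤ |j| then bb j ^ 2 else 0) := by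
    intro j; split
    · positivity
    · exact le_rfl
  have hside1 : ∀ N : ℕ, ∑ k ∈ range N,
      (if T ≤ |(k : ℤ)| then bb (k : ℤ) ^ 2 else 0) ≤ 2 / T := by
    intro N
    have heq : ∀ k ∈ range N, (if T ≤ |(k : ℤ)| then bb (k : ℤ) ^ 2 else 0)
        = (if m ≤ k then ((k : ℝ) ^ 2)⁻¹ else 0) := by
      intro k _
      have hab : |(k : ℤ)| = (k : ℤ) := abs_of_nonneg (Int.ofNat_nonneg k)
      by_cases h : T ≤ |(k : ℤ)|
      · rw [if_pos h]
        rw [hab] at h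
        rw [if_pos (by omega), bb_sq_nat k (by omega)]
      · rw [if_neg h]
        rw [hab] at h
        rw [if_neg (by omega)]
    rw [Finset.sum_congr rfl heq, ← hmT]
    exact nat_tail_sum m hm N
  have hside2 : ∀ N : ℕ, ∑ k ∈ range N,
      (if T ≤ |(-((k : ℤ) + 1))| then bb (-((k : ℤ) + 1)) ^ 2 else 0) ≤ 2 / T := by
    intro N
    have heq : ∀ k ∈ range N, (if T ≤ |(-((k : ℤ) + 1))| then bb (-((k : ℤ) + 1)) ^ 2 else 0)
        = (if m ≤ k + 1 then (((k + 1 : ℕ) : ℝ) ^ 2)⁻¹ else 0) := by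
      intro k _
      have hab : |(-((k : ℤ) + 1))| = (k : ℤ) + 1 := by
        rw [abs_neg]; exact abs_of_nonneg (by positivity)
      by_cases h : T ≤ |(-((k : ℤ) + 1))|
      · rw [if_pos h]
        rw [hab] at h
        rw [if_pos (by omega), bb_sq_neg k]
        norm_cast
      · rw [if_neg h]
        rw [hab] at h
        rw [if_neg (by omega)]
    rw [Finset.sum_congr rfl heq]
    have : ∑ k ∈ range N, (if m ≤ k + 1 then (((k + 1 : ℕ) : ℝ) ^ 2)⁻¹ else 0)
        ≤ ∑ k ∈ range (N + 1), (if m ≤ k then ((k : ℝ) ^ 2)⁻¹ else 0) := by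
      rw [Finset.sum_range_succ' (fun k => if m ≤ k then ((k : ℝ) ^ 2)⁻¹ else 0) N,
        if_neg (show ¬ m ≤ 0 by omega), add_zero]
    calc _ ≤ _ := this
      _ ≤ 2 / (m : ℝ) := nat_tail_sum m hm (N + 1)
      _ = 2 / (T : ℝ) := by rw [hmT]
  have key := int_tsum_bound (fun j : ℤ => if T ≤ |j| then bb j ^ 2 else 0) (2 / T)
    hnn hside1 hside2
  refine ⟨key.1, ?_⟩
  calc ∑' j : ℤ, (if T ≤ |j| then bb j ^ 2 else 0) ≤ 2 * (2 / T) := key.2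
    _ = 4 / T := by ring

lemma bb_total :
    Summable (fun j : ℤ => bb j ^ 2) ∧ ∑' j : ℤ, bb j ^ 2 ≤ 6 := by
  have hside1 : ∀ N : ℕ, ∑ k ∈ range N, bb (k : ℤ) ^ 2 ≤ 3 := by
    intro N
    have heq : ∀ k ∈ range N, bb (k : ℤ) ^ 2
        = (if k = 0 then (1 : ℝ) else 0) + (if 1 ≤ k then ((k : ℝ) ^ 2)⁻¹ else 0) := by
      intro k _
      rcases Nat.eq_zero_or_pos k with h | h
      · subst h; simp [bb_zero]
      · rw [if_neg (show ¬ (k = 0) by omega), if_pos (show 1 ≤ k by omega), bb_sq_nat k (by omega), zero_add]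
    rw [Finset.sum_congr rfl heq, Finset.sum_add_distrib]
    have h1 : ∑ k ∈ range N, (if k = 0 then (1 : ℝ) else 0) ≤ 1 := by
      rw [Finset.sum_ite_eq' (range N) 0 (fun _ => (1 : ℝ))]
      split <;> norm_num
    have h2 : ∑ k ∈ range N, (if 1 ≤ k then ((k : ℝ) ^ 2)⁻¹ else 0) ≤ 2 := by
      have := nat_tail_sum 1 le_rfl N
      norm_num at this
      convert this using 2
    linarith
  have hside2 : ∀ N : ℕ, ∑ k ∈ range N, bb (-((k : ℤ) + 1)) ^ 2 ≤ 3 := by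
    intro N
    have heq : ∀ k ∈ range N, bb (-((k : ℤ) + 1)) ^ 2 = (((k : ℝ) + 1) ^ 2)⁻¹ := by
      intro k _; exact bb_sq_neg k
    rw [Finset.sum_congr rfl heq]
    have h2 : ∑ k ∈ range N, (((k : ℝ) + 1) ^ 2)⁻¹ ≤ 2 := by
      have base := nat_tail_sum 1 le_rfl (N + 1)
      rw [Finset.sum_range_succ' (fun k => if 1 ≤ k then ((k : ℝ) ^ 2)⁻¹ else 0) N] at base
      calc ∑ k ∈ range N, (((k : ℝ) + 1) ^ 2)⁻¹
          = ∑ k ∈ range N, (if 1 ≤ k + 1 then (((k + 1 : ℕ) : ℝ) ^ 2)⁻¹ else 0) := by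
            apply Finset.sum_congr rfl; intro k _
            rw [if_pos (by omega)]; push_cast; ring_nf
        _ ≤ 2 / ((1 : ℕ) : ℝ) := by
            refine le_trans ?_ base
            simp
        _ = 2 := by norm_num
    linarith
  have key := int_tsum_bound (fun j : ℤ => bb j ^ 2) 3
    (fun j => by positivity) hside1 hside2
  exact ⟨key.1, by linarith [key.2]⟩

lemma amgm (s : ℝ) (hs : 0 < s) (x y : ℝ) : x * y ≤ s / 2 * x ^ 2 + s⁻¹ / 2 * y ^ 2 := by
  have key : s / 2 * x ^ 2 + s⁻¹ / 2 * y ^ 2 - x * y = (s * x - y) ^ 2 / (2 * s) := by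
    field_simp
    ring
  nlinarith [div_nonneg (sq_nonneg (s * x - y)) (by linarith : (0:ℝ) ≤ 2 * s)]

set_option maxHeartbeats 3000000 in
theorem stmt_13 :
    ∃ C : ℝ, 0 < C ∧ ∀ (r : ℤ → ℝ), (∀ k, 0 ≤ r k) →
      Summable (fun k => (r k) ^ 2) → ∀ n : ℤ, 1 ≤ |n| →
      ∀ lam : ℂ, ‖lam - (n : ℂ)‖ = 1 / 2 →
      ∑' i : ℤ, ∑' k : ℤ,
          (r (i + k)) ^ 2 /
            (‖lam - (i : ℂ)‖ * ‖lam - (k : ℂ)‖) ≤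
        C * ((∑' k : ℤ, (r k) ^ 2) / Real.sqrt ((|n| : ℤ) : ℝ) +
          ∑' j : {j : ℤ // |n| ≤ |j|}, (r (j : ℤ)) ^ 2) := by
  refine ⟨100, by norm_num, ?_⟩
  intro r hr hrs n hn lam hlam
  set s : ℝ := Real.sqrt (((|n| : ℤ) : ℝ)) with hs_def
  have hn1 : (1 : ℝ) ≤ ((|n| : ℤ) : ℝ) := by exact_mod_cast hn
  have hs1 : 1 ≤ s := by
    rw [hs_def, show (1:ℝ) = Real.sqrt 1 by simp]
    exact Real.sqrt_le_sqrt hn1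
  have hs0 : (0:ℝ) < s := lt_of_lt_of_le one_pos hs1
  have hs2 : s ^ 2 = ((|n| : ℤ) : ℝ) := Real.sq_sqrt (by linarith)
  obtain ⟨a, ha_def⟩ : ∃ a : ℤ → ℝ, a = fun i : ℤ => (‖lam - (i : ℂ)‖)⁻¹ := ⟨_, rfl⟩
  have ha0 : ∀ i, 0 ≤ a i := fun i => by
    rw [ha_def]; exact inv_nonneg.2 (norm_nonneg _)
  -- pointwise bound a i ≤ 2 * bb (i - n)
  have hab : ∀ i, a i ≤ 2 * bb (i - n) := by
    intro i
    by_cases hi : i = n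
    · subst hi
      simp only [ha_def, sub_self, bb_zero, hlam]
      norm_num
    · have hd1 : (1:ℤ) ≤ |i - n| := Int.one_le_abs (sub_ne_zero.mpr hi)
      have hd1' : (1:ℝ) ≤ ((|i - n| : ℤ) : ℝ) := by exact_mod_cast hd1
      have htri : ((|i - n| : ℤ) : ℝ) ≤ 1/2 + ‖lam - (i : ℂ)‖ := by
        have t := norm_sub_le_norm_sub_add_norm_sub ((n : ℂ)) lam ((i : ℂ))
        have h1 : ‖(n : ℂ) - (i : ℂ)‖ = ((|i - n| : ℤ) : ℝ) := by
          rw [show ((n : ℂ) - (i : ℂ)) = (((n - i : ℤ)) : ℂ) by push_cast; ring,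
            Complex.norm_intCast]
          rw [show |((n - i : ℤ) : ℝ)| = ((|n - i| : ℤ) : ℝ) by push_cast; rfl,
            abs_sub_comm n i]
        have h2 : ‖(n : ℂ) - lam‖ = 1/2 := by
          rw [norm_sub_rev]; exact hlam
        rw [h1, h2] at t
        linarith
      have hpos : (0:ℝ) < ((|i - n| : ℤ) : ℝ) / 2 := by linarith
      have hge : ((|i - n| : ℤ) : ℝ) / 2 ≤ ‖lam - (i : ℂ)‖ := by linarith
      have hinv : a i ≤ (((|i - n| : ℤ) : ℝ) / 2)⁻¹ := by
        rw [ha_def]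
        simp only []
        exact inv_anti₀ hpos hge
      rw [bb_of_ne _ (sub_ne_zero.mpr hi)]
      calc a i ≤ (((|i - n| : ℤ) : ℝ) / 2)⁻¹ := hinv
        _ = 2 * ((|i - n| : ℤ) : ℝ)⁻¹ := by
            rw [inv_div]; ring
  have ha_le2 : ∀ i, a i ≤ 2 := by
    intro i
    calc a i ≤ 2 * bb (i - n) := hab i
      _ ≤ 2 * 1 := by nlinarith [bb_le_one (i - n), bb_nonneg (i - n)]
      _ = 2 := by ring
  have ha2b : ∀ i, a i ^ 2 ≤ 4 * bb (i - n) ^ 2 := by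
    intro i
    nlinarith [hab i, ha0 i, bb_nonneg (i - n)]
  have hbb := bb_total
  have hbbshift : Summable (fun i : ℤ => bb (i - n) ^ 2) :=
    (Equiv.subRight n).summable_iff.mpr hbb.1
  have hbbshift_sum : ∑' i : ℤ, bb (i - n) ^ 2 = ∑' j : ℤ, bb j ^ 2 :=
    (Equiv.subRight n).tsum_eq (fun j => bb j ^ 2)
  have ha2 : Summable (fun i => a i ^ 2) :=
    Summable.of_nonneg_of_le (fun i => sq_nonneg _) ha2b (hbbshift.mul_left 4)
  have ha2sum : ∑' i, a i ^ 2 ≤ 24 := by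
    calc ∑' i, a i ^ 2 ≤ ∑' i, 4 * bb (i - n) ^ 2 :=
          Summable.tsum_le_tsum ha2b ha2 (hbbshift.mul_left 4)
      _ = 4 * ∑' i, bb (i - n) ^ 2 := tsum_mul_left
      _ = 4 * ∑' j, bb j ^ 2 := by rw [hbbshift_sum]
      _ ≤ 24 := by linarith [hbb.2]
  have ha2shift : ∀ m : ℤ, Summable (fun i => a (m - i) ^ 2) := fun m =>
    (Equiv.subLeft m).summable_iff.mpr ha2
  have ha2shift_sum : ∀ m : ℤ, ∑' i, a (m - i) ^ 2 = ∑' i, a i ^ 2 := fun m =>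
    (Equiv.subLeft m).tsum_eq (fun i => a i ^ 2)
  -- tail bound
  have hatail : ∀ T : ℤ, 1 ≤ T →
      Summable (fun i : ℤ => if T ≤ |i - n| then a i ^ 2 else 0) ∧
        ∑' i : ℤ, (if T ≤ |i - n| then a i ^ 2 else 0) ≤ 16 / T := by
    intro T hT
    have hbt := bb_tail T hT
    have hsummul : Summable (fun i : ℤ => 4 * (if T ≤ |i - n| then bb (i - n) ^ 2 else 0)) :=
      (((Equiv.subRight n).summable_iff.mpr hbt.1)).mul_left 4
    have hpt : ∀ i : ℤ, (if T ≤ |i - n| then a i ^ 2 else 0)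
        ≤ 4 * (if T ≤ |i - n| then bb (i - n) ^ 2 else 0) := by
      intro i
      by_cases h : T ≤ |i - n|
      · rw [if_pos h, if_pos h]; exact ha2b i
      · rw [if_neg h, if_neg h]; norm_num
    have hnn : ∀ i : ℤ, 0 ≤ (if T ≤ |i - n| then a i ^ 2 else 0) := by
      intro i; split
      · exact sq_nonneg _
      · exact le_rfl
    have hsummable : Summable (fun i : ℤ => if T ≤ |i - n| then a i ^ 2 else 0) :=
      Summable.of_nonneg_of_le hnn hpt hsummul
    refine ⟨hsummable, ?_⟩
    calc ∑' i : ℤ, (if T ≤ |i - n| then a i ^ 2 else 0)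
        ≤ ∑' i : ℤ, 4 * (if T ≤ |i - n| then bb (i - n) ^ 2 else 0) :=
          Summable.tsum_le_tsum hpt hsummable hsummul
      _ = 4 * ∑' i : ℤ, (if T ≤ |i - n| then bb (i - n) ^ 2 else 0) := tsum_mul_left
      _ = 4 * ∑' j : ℤ, (if T ≤ |j| then bb j ^ 2 else 0) := by
          congr 1
          exact (Equiv.subRight n).tsum_eq (fun j => if T ≤ |j| then bb j ^ 2 else 0)
      _ ≤ 4 * (4 / T) := by
          have := hbt.2
          have h4 : (0:ℝ) ≤ 4 := by norm_num
          nlinarith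
      _ = 16 / T := by ring
  -- convolution weights
  set W : ℤ → ℝ := fun m => ∑' i : ℤ, a i * a (m - i) with hW_def
  have hWhalf : ∀ m : ℤ, Summable (fun i => (1:ℝ)/2 * a i ^ 2 + 1/2 * a (m - i) ^ 2) :=
    fun m => (ha2.mul_left _).add ((ha2shift m).mul_left _)
  have hWsummand : ∀ m : ℤ, Summable (fun i => a i * a (m - i)) := by
    intro m
    apply Summable.of_nonneg_of_le (fun i => mul_nonneg (ha0 i) (ha0 (m - i))) _ (hWhalf m)
    intro i
    nlinarith [sq_nonneg (a i - a (m - i))]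
  have hW24 : ∀ m : ℤ, W m ≤ 24 := by
    intro m
    have step : W m ≤ ∑' i : ℤ, ((1:ℝ)/2 * a i ^ 2 + 1/2 * a (m - i) ^ 2) := by
      apply Summable.tsum_le_tsum _ (hWsummand m) (hWhalf m)
      intro i
      nlinarith [sq_nonneg (a i - a (m - i))]
    have heval : ∑' i : ℤ, ((1:ℝ)/2 * a i ^ 2 + 1/2 * a (m - i) ^ 2)
        = 1/2 * (∑' i, a i ^ 2) + 1/2 * (∑' i, a (m - i) ^ 2) := by
      rw [Summable.tsum_add (ha2.mul_left _) ((ha2shift m).mul_left _), tsum_mul_left, tsum_mul_left]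
    rw [heval, ha2shift_sum m] at step
    linarith
  have hWnn : ∀ m : ℤ, 0 ≤ W m := fun m =>
    tsum_nonneg (fun i => mul_nonneg (ha0 i) (ha0 (m - i)))
  -- the key bound for small |m|
  have hWsmall : ∀ m : ℤ, |m| < |n| → W m ≤ 56 / s := by
    intro m hm
    set T : ℤ := (|n| + 1) / 2 with hT_def
    have hT1 : (1:ℤ) ≤ T := by omega
    have hTn : (|n| : ℤ) ≤ 2 * T := by omega
    have hTr : (0:ℝ) < (T : ℝ) := by exact_mod_cast hT1.trans_lt' zero_lt_one
    have h16T : 16 / (T:ℝ) ≤ 32 / s ^ 2 := by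
      rw [hs2]
      rw [div_le_div_iff₀ hTr (by linarith)]
      have : ((|n| : ℤ) : ℝ) ≤ 2 * (T : ℝ) := by exact_mod_cast hTn
      linarith
    have htail1 := hatail T hT1
    -- second tail family, via reindexing j = m - i
    have htail2sum : Summable (fun i : ℤ => if T ≤ |m - i - n| then a (m - i) ^ 2 else 0) := by
      have h := (Equiv.subLeft m).summable_iff.mpr htail1.1
      apply h.congr
      intro i
      simp [Function.comp, Equiv.subLeft_apply]
    have htail2bound : ∑' i : ℤ, (if T ≤ |m - i - n| then a (m - i) ^ 2 else 0) ≤ 16 / T := by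
      have heq0 := (Equiv.subLeft m).tsum_eq (fun j => if T ≤ |j - n| then a j ^ 2 else 0)
      simp only [Equiv.subLeft_apply] at heq0
      rw [heq0]
      exact htail1.2
    -- cover estimate
    have hcover : ∀ i : ℤ, a i * a (m - i)
        ≤ s / 2 * (if T ≤ |i - n| then a i ^ 2 else 0)
          + (s / 2 * (if T ≤ |m - i - n| then a (m - i) ^ 2 else 0)
            + s⁻¹ * ((1:ℝ)/2 * a i ^ 2 + 1/2 * a (m - i) ^ 2)) := by
      intro i
      have hcase : T ≤ |i - n| ∨ T ≤ |m - i - n| := by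
        have h3 : |m - 2*n| ≤ |i - n| + |m - i - n| := by
          calc |m - 2*n| = |(i - n) + (m - i - n)| := by ring_nf
            _ ≤ |i - n| + |m - i - n| := abs_add_le _ _
        have h4 : |2*n| - |m| ≤ |m - 2*n| := by
          have h5 := abs_sub_abs_le_abs_sub (2*n) m
          rw [abs_sub_comm (2*n) m] at h5
          linarith
        have h6 : |2*n| = 2 * |n| := by rw [abs_mul]; norm_num
        omega
      have hsinv : (0:ℝ) ≤ s⁻¹ := inv_nonneg.2 hs0.le
      rcases hcase with h | h
      · rw [if_pos h]
        have key := amgm s hs0 (a i) (a (m - i))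
        have hother : (0:ℝ) ≤ (if T ≤ |m - i - n| then a (m - i) ^ 2 else 0) := by
          split
          · exact sq_nonneg _
          · exact le_rfl
        nlinarith [sq_nonneg (a i), sq_nonneg (a (m - i)), hs0.le]
      · rw [if_pos h]
        have key : a (m - i) * a i ≤ s / 2 * a (m - i) ^ 2 + s⁻¹ / 2 * a i ^ 2 :=
          amgm s hs0 (a (m - i)) (a i)
        have hother : (0:ℝ) ≤ (if T ≤ |i - n| then a i ^ 2 else 0) := by
          split
          · exact sq_nonneg _
          · exact le_rfl
        nlinarith [sq_nonneg (a i), sq_nonneg (a (m - i)), hs0.le]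
    -- summability of the right side
    have hrhs1 : Summable (fun i : ℤ => s / 2 * (if T ≤ |i - n| then a i ^ 2 else 0)) :=
      htail1.1.mul_left _
    have hrhs2 : Summable (fun i : ℤ =>
        s / 2 * (if T ≤ |m - i - n| then a (m - i) ^ 2 else 0)
          + s⁻¹ * ((1:ℝ)/2 * a i ^ 2 + 1/2 * a (m - i) ^ 2)) :=
      (htail2sum.mul_left _).add ((hWhalf m).mul_left _)
    have step : W m ≤ ∑' i : ℤ, (s / 2 * (if T ≤ |i - n| then a i ^ 2 else 0)
          + (s / 2 * (if T ≤ |m - i - n| then a (m - i) ^ 2 else 0)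
            + s⁻¹ * ((1:ℝ)/2 * a i ^ 2 + 1/2 * a (m - i) ^ 2))) :=
      Summable.tsum_le_tsum hcover (hWsummand m) (hrhs1.add hrhs2)
    have heval : ∑' i : ℤ, (s / 2 * (if T ≤ |i - n| then a i ^ 2 else 0)
          + (s / 2 * (if T ≤ |m - i - n| then a (m - i) ^ 2 else 0)
            + s⁻¹ * ((1:ℝ)/2 * a i ^ 2 + 1/2 * a (m - i) ^ 2)))
        = s / 2 * (∑' i : ℤ, (if T ≤ |i - n| then a i ^ 2 else 0))
          + (s / 2 * (∑' i : ℤ, (if T ≤ |m - i - n| then a (m - i) ^ 2 else 0))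
            + s⁻¹ * (1/2 * (∑' i, a i ^ 2) + 1/2 * (∑' i, a (m - i) ^ 2))) := by
      rw [Summable.tsum_add hrhs1 hrhs2, Summable.tsum_add (htail2sum.mul_left _) ((hWhalf m).mul_left _),
        tsum_mul_left, tsum_mul_left, tsum_mul_left,
        Summable.tsum_add (ha2.mul_left _) ((ha2shift m).mul_left _), tsum_mul_left, tsum_mul_left]
    rw [heval] at step
    have hbig : s / 2 * (∑' i : ℤ, (if T ≤ |i - n| then a i ^ 2 else 0))
          + (s / 2 * (∑' i : ℤ, (if T ≤ |m - i - n| then a (m - i) ^ 2 else 0))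
            + s⁻¹ * (1/2 * (∑' i, a i ^ 2) + 1/2 * (∑' i, a (m - i) ^ 2))) ≤ 56 / s := by
      have e1 := htail1.2
      have e2 := htail2bound
      have e3 := ha2sum
      have e4 : ∑' i, a (m - i) ^ 2 ≤ 24 := by rw [ha2shift_sum m]; exact ha2sum
      have t1nn : (0:ℝ) ≤ ∑' i : ℤ, (if T ≤ |i - n| then a i ^ 2 else 0) :=
        tsum_nonneg (fun i => by split
                                 · exact sq_nonneg _
                                 · exact le_rfl)
      have t2nn : (0:ℝ) ≤ ∑' i : ℤ, (if T ≤ |m - i - n| then a (m - i) ^ 2 else 0) :=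
        tsum_nonneg (fun i => by split
                                 · exact sq_nonneg _
                                 · exact le_rfl)
      have hanns : (0:ℝ) ≤ ∑' i, a i ^ 2 := tsum_nonneg (fun i => sq_nonneg _)
      have hanns2 : (0:ℝ) ≤ ∑' i, a (m - i) ^ 2 := tsum_nonneg (fun i => sq_nonneg _)
      have hkey : s * (16 / (T:ℝ)) ≤ 32 / s := by
        calc s * (16 / (T:ℝ)) ≤ s * (32 / s ^ 2) :=
              mul_le_mul_of_nonneg_left h16T hs0.le
          _ = 32 / s := by field_simp
      have hsinv : s⁻¹ = 1 / s := (one_div s).symm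
      calc s / 2 * (∑' i : ℤ, (if T ≤ |i - n| then a i ^ 2 else 0))
          + (s / 2 * (∑' i : ℤ, (if T ≤ |m - i - n| then a (m - i) ^ 2 else 0))
            + s⁻¹ * (1/2 * (∑' i, a i ^ 2) + 1/2 * (∑' i, a (m - i) ^ 2)))
          ≤ s / 2 * (16 / T) + (s / 2 * (16 / T) + s⁻¹ * (1/2 * 24 + 1/2 * 24)) := by
            have hs2' : (0:ℝ) ≤ s / 2 := by linarith
            have b1 : s / 2 * (∑' i : ℤ, (if T ≤ |i - n| then a i ^ 2 else 0))
                ≤ s / 2 * (16 / T) := mul_le_mul_of_nonneg_left e1 hs2'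
            have b2 : s / 2 * (∑' i : ℤ, (if T ≤ |m - i - n| then a (m - i) ^ 2 else 0))
                ≤ s / 2 * (16 / T) := mul_le_mul_of_nonneg_left e2 hs2'
            have b3 : s⁻¹ * (1/2 * (∑' i, a i ^ 2) + 1/2 * (∑' i, a (m - i) ^ 2))
                ≤ s⁻¹ * (1/2 * 24 + 1/2 * 24) :=
              mul_le_mul_of_nonneg_left (by linarith) (inv_nonneg.2 hs0.le)
            linarith
        _ = s * (16 / T) + s⁻¹ * 24 := by ring
        _ ≤ 32 / s + s⁻¹ * 24 := by linarith
        _ = 56 / s := by rw [hsinv]; ring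
    linarith
  -- shifted r summability
  have hshift_r : ∀ i : ℤ, Summable (fun k : ℤ => r (i + k) ^ 2) := by
    intro i
    have h := (Equiv.addLeft i).summable_iff.mpr hrs
    apply h.congr
    intro k
    simp [Function.comp, Equiv.coe_addLeft]
  have hshift_rsum : ∀ i : ℤ, ∑' k : ℤ, r (i + k) ^ 2 = ∑' k : ℤ, r k ^ 2 := by
    intro i
    have h := (Equiv.addLeft i).tsum_eq (fun mm : ℤ => r mm ^ 2)
    simpa [Equiv.coe_addLeft] using h
  -- product summability
  have hp1 : Summable (fun p : ℤ × ℤ => a p.1 ^ 2 * r (p.1 + p.2) ^ 2) := by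
    have hnn1 : (0 : ℤ × ℤ → ℝ) ≤ fun p : ℤ × ℤ => a p.1 ^ 2 * r (p.1 + p.2) ^ 2 :=
      fun p => mul_nonneg (sq_nonneg _) (sq_nonneg _)
    refine (summable_prod_of_nonneg hnn1).mpr ⟨?_, ?_⟩
    · intro x
      apply ((hshift_r x).mul_left (a x ^ 2)).congr
      intro y
      rfl
    · apply Summable.congr (ha2.mul_right (∑' k : ℤ, r k ^ 2))
      intro x
      dsimp only
      rw [tsum_mul_left, hshift_rsum x]
  have hp2 : Summable (fun p : ℤ × ℤ => a p.2 ^ 2 * r (p.1 + p.2) ^ 2) := by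
    have h := (Equiv.prodComm ℤ ℤ).summable_iff.mpr hp1
    apply h.congr
    intro p
    simp only [Function.comp_apply, Equiv.coe_prodComm, Prod.fst_swap, Prod.snd_swap]
    rw [add_comm p.2 p.1]
  obtain ⟨f, hf_def⟩ : ∃ f : ℤ × ℤ → ℝ,
      f = fun p : ℤ × ℤ => r (p.1 + p.2) ^ 2 * (a p.1 * a p.2) := ⟨_, rfl⟩
  have hf_nn : ∀ p, 0 ≤ f p := by
    intro p
    rw [hf_def]
    exact mul_nonneg (sq_nonneg _) (mul_nonneg (ha0 _) (ha0 _))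
  have hf_le : ∀ p, f p ≤ 1/2 * (a p.1 ^ 2 * r (p.1 + p.2) ^ 2)
      + 1/2 * (a p.2 ^ 2 * r (p.1 + p.2) ^ 2) := by
    intro p
    rw [hf_def]
    dsimp only
    nlinarith [mul_nonneg (sq_nonneg (r (p.1 + p.2))) (sq_nonneg (a p.1 - a p.2))]
  have hfs : Summable f :=
    Summable.of_nonneg_of_le hf_nn hf_le ((hp1.mul_left _).add (hp2.mul_left _))
  have hinner : ∀ i : ℤ, Summable (fun k : ℤ => f (i, k)) := by
    intro i
    apply Summable.of_nonneg_of_le (fun k => hf_nn (i, k)) _ ((hshift_r i).mul_left 4)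
    intro k
    rw [hf_def]
    dsimp only
    have hik : a i * a k ≤ 4 := by nlinarith [ha_le2 i, ha_le2 k, ha0 i, ha0 k]
    calc r (i + k) ^ 2 * (a i * a k) ≤ r (i + k) ^ 2 * 4 :=
          mul_le_mul_of_nonneg_left hik (sq_nonneg _)
      _ = 4 * r (i + k) ^ 2 := by ring
  -- reshuffling equivalence
  set e : ℤ × ℤ ≃ ℤ × ℤ :=
    ⟨fun q => (q.2, q.1 - q.2), fun p => (p.1 + p.2, p.1),
      by rintro ⟨x, y⟩; simp [Prod.ext_iff],
      by rintro ⟨x, y⟩; simp [Prod.ext_iff]⟩ with he_def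
  have hfe : Summable (fun q : ℤ × ℤ => f (e q)) := e.summable_iff.mpr hfs
  have hfe_eval : ∀ (mm i : ℤ), f (e (mm, i)) = r mm ^ 2 * (a i * a (mm - i)) := by
    intro mm i
    show f (i, mm - i) = _
    rw [hf_def]
    dsimp only
    rw [show i + (mm - i) = mm by ring]
  have hinner2 : ∀ mm : ℤ, Summable (fun i : ℤ => f (e (mm, i))) := by
    intro mm
    apply Summable.congr ((hWsummand mm).mul_left (r mm ^ 2))
    intro i
    exact (hfe_eval mm i).symm
  have hinner_eq : ∀ mm : ℤ, ∑' i : ℤ, f (e (mm, i)) = r mm ^ 2 * W mm := by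
    intro mm
    rw [tsum_congr (fun i => hfe_eval mm i), tsum_mul_left]
  have hmarg : Summable (fun mm : ℤ => r mm ^ 2 * W mm) := by
    have h := ((summable_prod_of_nonneg (fun q => hf_nn (e q))).mp hfe).2
    apply h.congr
    intro mm
    exact hinner_eq mm
  have hLHS : (∑' i : ℤ, ∑' k : ℤ, r (i + k) ^ 2 /
      (‖lam - (i : ℂ)‖ * ‖lam - (k : ℂ)‖))
      = ∑' mm : ℤ, r mm ^ 2 * W mm := by
    have e1 : (∑' i : ℤ, ∑' k : ℤ, r (i + k) ^ 2 /
        (‖lam - (i : ℂ)‖ * ‖lam - (k : ℂ)‖))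
        = ∑' i : ℤ, ∑' k : ℤ, f (i, k) := by
      apply tsum_congr; intro i
      apply tsum_congr; intro k
      rw [hf_def, ha_def]
      dsimp only
      rw [div_eq_mul_inv, mul_inv]
    calc (∑' i : ℤ, ∑' k : ℤ, r (i + k) ^ 2 /
        (‖lam - (i : ℂ)‖ * ‖lam - (k : ℂ)‖))
        = ∑' i : ℤ, ∑' k : ℤ, f (i, k) := e1
      _ = ∑' p : ℤ × ℤ, f p := (Summable.tsum_prod' hfs hinner).symm
      _ = ∑' q : ℤ × ℤ, f (e q) := (e.tsum_eq f).symm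
      _ = ∑' mm : ℤ, ∑' i : ℤ, f (e (mm, i)) := Summable.tsum_prod' hfe hinner2
      _ = ∑' mm : ℤ, r mm ^ 2 * W mm := tsum_congr hinner_eq
  -- indicator function machinery
  have hind_nn : ∀ mm : ℤ, 0 ≤ Set.indicator {j : ℤ | |n| ≤ |j|} (fun j => r j ^ 2) mm :=
    fun mm => Set.indicator_nonneg (fun j _ => sq_nonneg _) mm
  have hind_le : ∀ mm : ℤ, Set.indicator {j : ℤ | |n| ≤ |j|} (fun j => r j ^ 2) mm ≤ r mm ^ 2 := by
    intro mm
    by_cases h : mm ∈ {j : ℤ | |n| ≤ |j|}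
    · rw [Set.indicator_of_mem h]
    · rw [Set.indicator_of_notMem h]
      exact sq_nonneg _
  have hind_sum : Summable (Set.indicator {j : ℤ | |n| ≤ |j|} (fun j => r j ^ 2)) :=
    Summable.of_nonneg_of_le hind_nn hind_le hrs
  have hpoint : ∀ mm : ℤ, r mm ^ 2 * W mm
      ≤ 100 / s * r mm ^ 2 + 100 * Set.indicator {j : ℤ | |n| ≤ |j|} (fun j => r j ^ 2) mm := by
    intro mm
    by_cases h : |n| ≤ |mm|
    · have hmem : mm ∈ {j : ℤ | |n| ≤ |j|} := h
      rw [Set.indicator_of_mem hmem]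
      have h1 : r mm ^ 2 * W mm ≤ r mm ^ 2 * 24 :=
        mul_le_mul_of_nonneg_left (hW24 mm) (sq_nonneg _)
      have h2 : 0 ≤ 100 / s * r mm ^ 2 :=
        mul_nonneg (div_nonneg (by norm_num) hs0.le) (sq_nonneg _)
      nlinarith [sq_nonneg (r mm)]
    · push_neg at h
      have hmem : mm ∉ {j : ℤ | |n| ≤ |j|} := not_le.mpr h
      rw [Set.indicator_of_notMem hmem]
      have h1 : r mm ^ 2 * W mm ≤ r mm ^ 2 * (56 / s) :=
        mul_le_mul_of_nonneg_left (hWsmall mm h) (sq_nonneg _)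
      have h3 : 0 ≤ s⁻¹ * r mm ^ 2 := mul_nonneg (inv_nonneg.2 hs0.le) (sq_nonneg _)
      have h4 : 100 / s * r mm ^ 2 - r mm ^ 2 * (56 / s) = 44 * (s⁻¹ * r mm ^ 2) := by
        field_simp
        ring
      linarith
  have hrhs_sum : Summable (fun mm : ℤ => 100 / s * r mm ^ 2
      + 100 * Set.indicator {j : ℤ | |n| ≤ |j|} (fun j => r j ^ 2) mm) :=
    (hrs.mul_left _).add (hind_sum.mul_left _)
  have hfinal : (∑' mm : ℤ, r mm ^ 2 * W mm)
      ≤ 100 / s * (∑' k : ℤ, r k ^ 2)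
        + 100 * ∑' mm : ℤ, Set.indicator {j : ℤ | |n| ≤ |j|} (fun j => r j ^ 2) mm := by
    calc (∑' mm : ℤ, r mm ^ 2 * W mm)
        ≤ ∑' mm : ℤ, (100 / s * r mm ^ 2
          + 100 * Set.indicator {j : ℤ | |n| ≤ |j|} (fun j => r j ^ 2) mm) :=
          Summable.tsum_le_tsum hpoint hmarg hrhs_sum
      _ = 100 / s * (∑' k : ℤ, r k ^ 2)
          + 100 * ∑' mm : ℤ, Set.indicator {j : ℤ | |n| ≤ |j|} (fun j => r j ^ 2) mm := by
          rw [Summable.tsum_add (hrs.mul_left _) (hind_sum.mul_left _), tsum_mul_left, tsum_mul_left]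
  have hsub : (∑' j : {j : ℤ // |n| ≤ |j|}, r (j : ℤ) ^ 2)
      = ∑' mm : ℤ, Set.indicator {j : ℤ | |n| ≤ |j|} (fun j => r j ^ 2) mm :=
    tsum_subtype {j : ℤ | |n| ≤ |j|} (fun j => r j ^ 2)
  rw [hLHS, hsub]
  refine le_trans hfinal (le_of_eq ?_)
  ring
end

section
/- Let r ∈ ℓ²(ℤ) be nonnegative with norm ‖r‖ and tail norms E_N(r). There is an absolute constant C such that for every N ≥ 1, Σ over pairs (j̃, p̃) of nonzero integers of (1/j̃²)(1/p̃²)·Σ_{|n|>N} r(2n - j̃ - p̃)² is at most C(E_N(r)² + ‖r‖²/N). -/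
open Finset Filter

set_option maxHeartbeats 1000000

lemma tail_sq (M : ℕ) (hM : 1 ≤ M) :
    ∑' n : ℕ, (if M ≤ n then 1 / (n:ℝ)^2 else 0) ≤ 2 / (M:ℝ) := by
  have hsq : Summable (fun n : ℕ => 1 / (n:ℝ)^2) := by
    rw [Real.summable_one_div_nat_pow]; norm_num
  have hnn : ∀ n : ℕ, 0 ≤ (if M ≤ n then 1 / (n:ℝ)^2 else 0) := by
    intro n; split <;> positivity
  have hf : Summable (fun n : ℕ => if M ≤ n then 1 / (n:ℝ)^2 else 0) := by
    apply Summable.of_nonneg_of_le hnn _ hsq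
    intro n; split
    · exact le_rfl
    · positivity
  have htel : HasSum (fun i : ℕ => 1/((M:ℝ)+i) - 1/((M:ℝ)+i+1)) (1/M) := by
    rw [hasSum_iff_tendsto_nat_of_nonneg]
    · have h1 : ∀ K : ℕ, ∑ i ∈ range K, (1/((M:ℝ)+i) - 1/((M:ℝ)+i+1)) = 1/(M:ℝ) - 1/((M:ℝ)+K) := by
        intro K
        have := Finset.sum_range_sub' (f := fun i : ℕ => 1/((M:ℝ)+i)) K
        simpa [add_assoc] using this
      simp_rw [h1]
      have hb : Tendsto (fun K : ℕ => (M:ℝ) + K) atTop atTop :=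
        tendsto_atTop_add_const_left _ _ tendsto_natCast_atTop_atTop
      have : Tendsto (fun K : ℕ => 1/((M:ℝ)+K)) atTop (nhds 0) := by
        simpa [one_div, Pi.inv_def] using hb.inv_tendsto_atTop
      simpa using (tendsto_const_nhds (x := 1/(M:ℝ))).sub this
    · intro i
      have h1 : (0:ℝ) < (M:ℝ) + i := by positivity
      have h2 : (M:ℝ) + i ≤ (M:ℝ) + i + 1 := by linarith
      have := one_div_le_one_div_of_le h1 h2
      linarith
  have key := Summable.sum_add_tsum_nat_add (f := fun n : ℕ => if M ≤ n then 1 / (n:ℝ)^2 else 0) M hf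
  have hz : ∑ i ∈ range M, (if M ≤ i then 1 / (i:ℝ)^2 else 0) = 0 := by
    apply Finset.sum_eq_zero; intro i hi
    rw [mem_range] at hi; rw [if_neg (by omega)]
  rw [← key, hz, zero_add]
  have hM1 : (1:ℝ) ≤ (M:ℝ) := by exact_mod_cast hM
  have hle : ∀ i : ℕ, (if M ≤ i + M then 1/(((i+M:ℕ)):ℝ)^2 else 0)
      ≤ 2 * (1/((M:ℝ)+i) - 1/((M:ℝ)+i+1)) := by
    intro i
    rw [if_pos (by omega)]
    push_cast
    have hx : (1:ℝ) ≤ (M:ℝ)+i := by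
      have : (0:ℝ) ≤ (i:ℝ) := Nat.cast_nonneg i
      linarith
    have h0 : (0:ℝ) < (M:ℝ)+i := by linarith
    have h1 : (0:ℝ) < (M:ℝ)+i+1 := by linarith
    have e1 : 1/((M:ℝ)+i) - 1/((M:ℝ)+i+1) = 1/(((M:ℝ)+i)*((M:ℝ)+i+1)) := by
      field_simp
      ring
    rw [e1, mul_one_div, add_comm (i:ℝ) (M:ℝ)]
    rw [div_le_div_iff₀ (by positivity) (by positivity)]
    nlinarith
  have hb := Summable.tsum_le_tsum hle ((summable_nat_add_iff M).2 hf) (htel.summable.mul_left 2)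
  refine hb.trans ?_
  rw [tsum_mul_left, htel.tsum_eq, mul_one_div]

lemma nat_sq_le : ∑' n : ℕ, 1 / (n:ℝ)^2 ≤ 2 := by
  have := tail_sq 1 le_rfl
  have e : ∀ n : ℕ, (if 1 ≤ n then 1 / (n:ℝ)^2 else 0) = 1 / (n:ℝ)^2 := by
    intro n
    by_cases h : 1 ≤ n
    · rw [if_pos h]
    · rw [if_neg h]
      have : n = 0 := by omega
      subst this; norm_num
  rw [tsum_congr e] at this
  simpa using this

lemma int_sq_le : ∑' j : ℤ, 1 / (j:ℝ)^2 ≤ 4 := by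
  have hnat : Summable (fun n : ℕ => 1 / (n:ℝ)^2) := by
    rw [Real.summable_one_div_nat_pow]; norm_num
  have h1 : Summable (fun n : ℕ => 1 / (((n:ℤ)):ℝ)^2) := by
    simpa using hnat
  have h2 : Summable (fun n : ℕ => 1 / (((-(n:ℤ)):ℤ):ℝ)^2) := by
    simpa using hnat
  have key := Summable.tsum_of_nat_of_neg (f := fun j : ℤ => 1/(j:ℝ)^2) h1 h2
  rw [key]
  have e1 : ∑' n : ℕ, 1 / (((n:ℤ)):ℝ)^2 = ∑' n : ℕ, 1 / ((n:ℝ))^2 := by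
    apply tsum_congr; intro n; norm_num
  have e2 : ∑' n : ℕ, 1 / (((-(n:ℤ)):ℤ):ℝ)^2 = ∑' n : ℕ, 1 / ((n:ℝ))^2 := by
    apply tsum_congr; intro n; push_cast; rw [neg_pow]; norm_num
  rw [e1, e2]
  have h0 : 1/(((0:ℤ)):ℝ)^2 = 0 := by norm_num
  rw [h0, sub_zero]
  linarith [nat_sq_le]


lemma int_tail_le (N : ℕ) (hN : 1 ≤ N) :
    ∑' j : ℤ, (if (N:ℤ) < |2*j| then 1 / (j:ℝ)^2 else 0) ≤ 8 / (N:ℝ) := by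
  set M : ℕ := N/2 + 1 with hMdef
  have hcond : ∀ n : ℕ, ((N:ℤ) < |2*(n:ℤ)| ↔ M ≤ n) := by
    intro n
    rw [hMdef, abs_of_nonneg (by positivity : (0:ℤ) ≤ 2*(n:ℤ))]
    omega
  have hnat : Summable (fun n : ℕ => 1 / (n:ℝ)^2) := by
    rw [Real.summable_one_div_nat_pow]; norm_num
  have htail : Summable (fun n : ℕ => if M ≤ n then 1 / (n:ℝ)^2 else 0) := by
    apply Summable.of_nonneg_of_le _ _ hnat
    · intro n; split <;> positivity
    · intro n; split
      · exact le_rfl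
      · positivity
  have e1 : (fun n : ℕ => if (N:ℤ) < |2*((n:ℤ))| then 1 / (((n:ℤ)):ℝ)^2 else 0)
      = (fun n : ℕ => if M ≤ n then 1 / (n:ℝ)^2 else 0) := by
    funext n
    rw [if_congr (hcond n) rfl rfl]
    norm_num
  have e2 : (fun n : ℕ => if (N:ℤ) < |2*(-(n:ℤ))| then 1 / (((-(n:ℤ)):ℤ):ℝ)^2 else 0)
      = (fun n : ℕ => if M ≤ n then 1 / (n:ℝ)^2 else 0) := by
    funext n
    have : |2*(-(n:ℤ))| = |2*(n:ℤ)| := by rw [mul_neg, abs_neg]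
    rw [this, if_congr (hcond n) rfl rfl]
    push_cast
    rw [neg_pow]
    norm_num
  have h1 : Summable (fun n : ℕ => if (N:ℤ) < |2*((n:ℤ))| then 1 / (((n:ℤ)):ℝ)^2 else 0) := by
    rw [e1]; exact htail
  have h2 : Summable (fun n : ℕ => if (N:ℤ) < |2*(-(n:ℤ))| then 1 / (((-(n:ℤ)):ℤ):ℝ)^2 else 0) := by
    rw [e2]; exact htail
  have key := Summable.tsum_of_nat_of_neg
    (f := fun j : ℤ => if (N:ℤ) < |2*j| then 1/(j:ℝ)^2 else 0) h1 h2
  rw [key, tsum_congr (fun n => congrFun e1 n), tsum_congr (fun n => congrFun e2 n)]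
  have h0 : (if (N:ℤ) < |2*(0:ℤ)| then 1/(((0:ℤ)):ℝ)^2 else 0) = 0 := by
    simp only [mul_zero, abs_zero]
    rw [if_neg (by omega)]
  rw [h0, sub_zero]
  have hT := tail_sq M (by omega)
  have hMN : (N:ℝ) ≤ 2 * (M:ℝ) := by
    have : N ≤ 2 * M := by omega
    exact_mod_cast this
  have hMpos : (0:ℝ) < (M:ℝ) := by positivity
  have hNpos : (0:ℝ) < (N:ℝ) := by exact_mod_cast hN
  have h24 : 2 / (M:ℝ) ≤ 4 / (N:ℝ) := by
    rw [div_le_div_iff₀ hMpos hNpos]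
    linarith
  have hadd := add_le_add hT hT
  have h8 : 2 / (M:ℝ) + 2 / (M:ℝ) ≤ 8 / (N:ℝ) := by
    have : (8:ℝ)/(N:ℝ) = 4/(N:ℝ) + 4/(N:ℝ) := by ring
    rw [this]
    exact add_le_add h24 h24
  exact le_trans hadd h8


theorem stmt_18 :
    ∃ C : ℝ, 0 < C ∧ ∀ (r : ℤ → ℝ), (∀ k, 0 ≤ r k) →
      Summable (fun k => (r k) ^ 2) → ∀ N : ℕ, 1 ≤ N →
      ∑' jp : {j : ℤ // j ≠ 0} × {p : ℤ // p ≠ 0},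
          (1 / ((jp.1 : ℤ) : ℝ) ^ 2) * (1 / ((jp.2 : ℤ) : ℝ) ^ 2) *
            ∑' n : {n : ℤ // (N : ℤ) < |n|},
              (r (2 * (n : ℤ) - (jp.1 : ℤ) - (jp.2 : ℤ))) ^ 2 ≤
        C * ((∑' m : {m : ℤ // (N : ℤ) ≤ |m|}, (r (m : ℤ)) ^ 2) +
          (∑' k : ℤ, (r k) ^ 2) / N) := by
  refine ⟨64, by norm_num, ?_⟩
  intro r hr hsum N hN
  have hNR : (1:ℝ) ≤ (N:ℝ) := by exact_mod_cast hN
  set S : ℝ := ∑' k : ℤ, (r k) ^ 2 with hSdef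
  set E : ℝ := ∑' m : {m : ℤ // (N : ℤ) ≤ |m|}, (r (m : ℤ)) ^ 2 with hEdef
  have hS0 : 0 ≤ S := tsum_nonneg (fun k => sq_nonneg _)
  have hE0 : 0 ≤ E := tsum_nonneg (fun m => sq_nonneg _)
  -- summability over ℤ of 1/j^2 and tail indicator
  have hZ : Summable (fun j : ℤ => 1 / (j:ℝ)^2) := by
    rw [Real.summable_one_div_int_pow]; norm_num
  have hZt : Summable (fun j : ℤ => if (N:ℤ) < |2*j| then 1 / (j:ℝ)^2 else 0) := by
    apply Summable.of_nonneg_of_le _ _ hZ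
    · intro j; split <;> positivity
    · intro j; split
      · exact le_rfl
      · positivity
  -- subtype versions
  have hJ : Summable (fun j : {j : ℤ // j ≠ 0} => 1 / ((j:ℤ):ℝ)^2) :=
    hZ.comp_injective Subtype.val_injective
  have hJt : Summable (fun j : {j : ℤ // j ≠ 0} =>
      if (N:ℤ) < |2*(j:ℤ)| then 1 / ((j:ℤ):ℝ)^2 else 0) :=
    hZt.comp_injective Subtype.val_injective
  set A : ℝ := ∑' j : {j : ℤ // j ≠ 0}, 1 / ((j:ℤ):ℝ)^2 with hAdef
  set T : ℝ := ∑' j : {j : ℤ // j ≠ 0},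
      (if (N:ℤ) < |2*(j:ℤ)| then 1 / ((j:ℤ):ℝ)^2 else 0) with hTdef
  have hA0 : 0 ≤ A := tsum_nonneg (fun j => by positivity)
  have hT0 : 0 ≤ T := tsum_nonneg (fun j => by split <;> positivity)
  have hA4 : A ≤ 4 := by
    refine le_trans (Summable.tsum_le_tsum_of_inj (Subtype.val) Subtype.val_injective
      (fun c _ => by positivity) (fun i => le_rfl) hJ hZ) int_sq_le
  have hT8 : T ≤ 8 / (N:ℝ) := by
    refine le_trans (Summable.tsum_le_tsum_of_inj (Subtype.val) Subtype.val_injective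
      (fun c _ => by split <;> positivity) (fun i => le_rfl) hJt hZt) (int_tail_le N hN)
  -- inner sums
  have hInnerSummable : ∀ j p : ℤ, Summable (fun n : {n : ℤ // (N : ℤ) < |n|} =>
      (r (2 * (n : ℤ) - j - p)) ^ 2) := by
    intro j p
    apply hsum.comp_injective
    intro a b hab
    have h1 : 2 * (a:ℤ) - j - p = 2 * (b:ℤ) - j - p := hab
    exact Subtype.ext (by linarith)
  have hTail : Summable (fun m : {m : ℤ // (N : ℤ) ≤ |m|} => (r (m : ℤ)) ^ 2) :=
    hsum.comp_injective Subtype.val_injective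
  have hI0 : ∀ j p : ℤ,
      0 ≤ ∑' n : {n : ℤ // (N : ℤ) < |n|}, (r (2 * (n : ℤ) - j - p)) ^ 2 :=
    fun j p => tsum_nonneg (fun n => sq_nonneg _)
  have hIleS : ∀ j p : ℤ,
      (∑' n : {n : ℤ // (N : ℤ) < |n|}, (r (2 * (n : ℤ) - j - p)) ^ 2) ≤ S := by
    intro j p
    refine Summable.tsum_le_tsum_of_inj (fun n => 2 * (n : ℤ) - j - p)
      (fun a b hab => Subtype.ext (by dsimp at hab; linarith)) (fun c _ => sq_nonneg _)
      (fun i => le_rfl) (hInnerSummable j p) hsum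
  have hIleE : ∀ j p : ℤ, |j| + |p| ≤ (N:ℤ) →
      (∑' n : {n : ℤ // (N : ℤ) < |n|}, (r (2 * (n : ℤ) - j - p)) ^ 2) ≤ E := by
    intro j p hjp
    have hmem : ∀ n : {n : ℤ // (N : ℤ) < |n|}, (N:ℤ) ≤ |2 * (n:ℤ) - j - p| := by
      intro n
      have h1 : (N:ℤ) < |(n:ℤ)| := n.2
      have h2 : |2*(n:ℤ)| - |j + p| ≤ |2*(n:ℤ) - (j + p)| := abs_sub_abs_le_abs_sub _ _
      have h3 : |j + p| ≤ |j| + |p| := abs_add_le _ _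
      have h4 : |2*(n:ℤ)| = 2 * |(n:ℤ)| := by rw [abs_mul]; norm_num
      have h5 : 2*(n:ℤ) - (j + p) = 2*(n:ℤ) - j - p := by ring
      rw [h5] at h2
      linarith
    refine Summable.tsum_le_tsum_of_inj
      (fun n : {n : ℤ // (N : ℤ) < |n|} => (⟨2 * (n:ℤ) - j - p, hmem n⟩ : {m : ℤ // (N : ℤ) ≤ |m|}))
      (fun a b hab => ?_) (fun c _ => sq_nonneg _) (fun i => le_rfl)
      (hInnerSummable j p) hTail
    have h1 : 2 * (a:ℤ) - j - p = 2 * (b:ℤ) - j - p := congrArg Subtype.val hab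
    exact Subtype.ext (by linarith)
  -- the three majorant functions
  set G1 : {j : ℤ // j ≠ 0} × {p : ℤ // p ≠ 0} → ℝ :=
    fun jp => (1 / ((jp.1:ℤ):ℝ)^2) * ((1 / ((jp.2:ℤ):ℝ)^2) * E) with hG1def
  set G2 : {j : ℤ // j ≠ 0} × {p : ℤ // p ≠ 0} → ℝ :=
    fun jp => (if (N:ℤ) < |2*(jp.1:ℤ)| then 1 / ((jp.1:ℤ):ℝ)^2 else 0) *
      ((1 / ((jp.2:ℤ):ℝ)^2) * S) with hG2def
  set G3 : {j : ℤ // j ≠ 0} × {p : ℤ // p ≠ 0} → ℝ :=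
    fun jp => (1 / ((jp.1:ℤ):ℝ)^2) *
      ((if (N:ℤ) < |2*(jp.2:ℤ)| then 1 / ((jp.2:ℤ):ℝ)^2 else 0) * S) with hG3def
  have hJE : Summable (fun p : {p : ℤ // p ≠ 0} => (1 / ((p:ℤ):ℝ)^2) * E) := hJ.mul_right E
  have hJS : Summable (fun p : {p : ℤ // p ≠ 0} => (1 / ((p:ℤ):ℝ)^2) * S) := hJ.mul_right S
  have hJtS : Summable (fun p : {p : ℤ // p ≠ 0} =>
      (if (N:ℤ) < |2*(p:ℤ)| then 1 / ((p:ℤ):ℝ)^2 else 0) * S) := hJt.mul_right S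
  have hG1s : Summable G1 :=
    hJ.mul_of_nonneg hJE (fun j => by positivity) (fun p => by positivity)
  have hG2s : Summable G2 :=
    hJt.mul_of_nonneg hJS (fun j => by simp only [Pi.zero_apply]; split <;> positivity) (fun p => by positivity)
  have hG3s : Summable G3 :=
    hJ.mul_of_nonneg hJtS (fun j => by positivity) (fun p => by
      have : (0:ℝ) ≤ (if (N:ℤ) < |2*(p:ℤ)| then 1 / ((p:ℤ):ℝ)^2 else 0) := by
        split <;> positivity
      positivity)
  have hG10 : ∀ jp, 0 ≤ G1 jp := fun jp => by
    simp only [hG1def]; positivity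
  have hG20 : ∀ jp, 0 ≤ G2 jp := fun jp => by
    simp only [hG2def]
    have : (0:ℝ) ≤ (if (N:ℤ) < |2*(jp.1:ℤ)| then 1 / ((jp.1:ℤ):ℝ)^2 else 0) := by
      split <;> positivity
    positivity
  have hG30 : ∀ jp, 0 ≤ G3 jp := fun jp => by
    simp only [hG3def]
    have : (0:ℝ) ≤ (if (N:ℤ) < |2*(jp.2:ℤ)| then 1 / ((jp.2:ℤ):ℝ)^2 else 0) := by
      split <;> positivity
    positivity
  -- pointwise bound
  have hpt : ∀ jp : {j : ℤ // j ≠ 0} × {p : ℤ // p ≠ 0},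
      (1 / ((jp.1 : ℤ) : ℝ) ^ 2) * (1 / ((jp.2 : ℤ) : ℝ) ^ 2) *
        (∑' n : {n : ℤ // (N : ℤ) < |n|},
          (r (2 * (n : ℤ) - (jp.1 : ℤ) - (jp.2 : ℤ))) ^ 2)
      ≤ G1 jp + G2 jp + G3 jp := by
    intro jp
    obtain ⟨j, p⟩ := jp
    by_cases hcase : |(j:ℤ)| + |(p:ℤ)| ≤ (N:ℤ)
    · have h1 : (1 / ((j : ℤ) : ℝ) ^ 2) * (1 / ((p : ℤ) : ℝ) ^ 2) *
          (∑' n : {n : ℤ // (N : ℤ) < |n|}, (r (2 * (n : ℤ) - (j : ℤ) - (p : ℤ))) ^ 2)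
          ≤ G1 (j, p) := by
        simp only [hG1def, ← mul_assoc]
        exact mul_le_mul_of_nonneg_left (hIleE _ _ hcase) (by positivity)
      have := hG20 (j, p)
      have := hG30 (j, p)
      linarith
    · push_neg at hcase
      have hor : (N:ℤ) < |2*(j:ℤ)| ∨ (N:ℤ) < |2*(p:ℤ)| := by
        by_contra hno
        push_neg at hno
        obtain ⟨ha, hb⟩ := hno
        rw [abs_mul] at ha hb
        simp only [abs_two] at ha hb
        omega
      rcases hor with h | h
      · have h1 : (1 / ((j : ℤ) : ℝ) ^ 2) * (1 / ((p : ℤ) : ℝ) ^ 2) *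
            (∑' n : {n : ℤ // (N : ℤ) < |n|}, (r (2 * (n : ℤ) - (j : ℤ) - (p : ℤ))) ^ 2)
            ≤ G2 (j, p) := by
          simp only [hG2def, if_pos h, ← mul_assoc]
          exact mul_le_mul_of_nonneg_left (hIleS _ _) (by positivity)
        have := hG10 (j, p)
        have := hG30 (j, p)
        linarith
      · have h1 : (1 / ((j : ℤ) : ℝ) ^ 2) * (1 / ((p : ℤ) : ℝ) ^ 2) *
            (∑' n : {n : ℤ // (N : ℤ) < |n|}, (r (2 * (n : ℤ) - (j : ℤ) - (p : ℤ))) ^ 2)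
            ≤ G3 (j, p) := by
          simp only [hG3def, if_pos h, ← mul_assoc]
          exact mul_le_mul_of_nonneg_left (hIleS _ _) (by positivity)
        have := hG10 (j, p)
        have := hG20 (j, p)
        linarith
  -- summability of the LHS function
  have hFs : Summable (fun jp : {j : ℤ // j ≠ 0} × {p : ℤ // p ≠ 0} =>
      (1 / ((jp.1 : ℤ) : ℝ) ^ 2) * (1 / ((jp.2 : ℤ) : ℝ) ^ 2) *
        (∑' n : {n : ℤ // (N : ℤ) < |n|},
          (r (2 * (n : ℤ) - (jp.1 : ℤ) - (jp.2 : ℤ))) ^ 2)) := by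
    have hWS : Summable (fun jp : {j : ℤ // j ≠ 0} × {p : ℤ // p ≠ 0} =>
        (1 / ((jp.1:ℤ):ℝ)^2) * ((1 / ((jp.2:ℤ):ℝ)^2) * S)) :=
      hJ.mul_of_nonneg hJS (fun j => by positivity) (fun p => by positivity)
    apply Summable.of_nonneg_of_le _ _ hWS
    · intro jp
      have := hI0 (jp.1:ℤ) (jp.2:ℤ)
      positivity
    · intro jp
      rw [← mul_assoc]
      exact mul_le_mul_of_nonneg_left (hIleS _ _) (by positivity)
  -- main chain
  have step1 := Summable.tsum_le_tsum hpt hFs ((hG1s.add hG2s).add hG3s)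
  have step2 : ∑' jp, (G1 jp + G2 jp + G3 jp)
      = (∑' jp, G1 jp) + (∑' jp, G2 jp) + (∑' jp, G3 jp) := by
    rw [Summable.tsum_add (hG1s.add hG2s) hG3s, Summable.tsum_add hG1s hG2s]
  have hT1 : ∑' jp, G1 jp = A * (A * E) := by
    rw [hG1def]
    rw [← Summable.tsum_mul_tsum hJ hJE (hJ.mul_of_nonneg hJE (fun j => by positivity)
      (fun p => by positivity))]
    rw [tsum_mul_right]
  have hT2 : ∑' jp, G2 jp = T * (A * S) := by
    rw [hG2def]
    rw [← Summable.tsum_mul_tsum hJt hJS hG2s]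
    rw [tsum_mul_right]
  have hT3 : ∑' jp, G3 jp = A * (T * S) := by
    rw [hG3def]
    rw [← Summable.tsum_mul_tsum hJ hJtS hG3s]
    rw [tsum_mul_right]
  have hNpos : (0:ℝ) < (N:ℝ) := by linarith
  have b1 : A * (A * E) ≤ 16 * E := by
    have h1 : A * E ≤ 4 * E := mul_le_mul_of_nonneg_right hA4 hE0
    have h2 : A * (A * E) ≤ 4 * (A * E) := mul_le_mul_of_nonneg_right hA4 (mul_nonneg hA0 hE0)
    linarith
  have b2 : T * (A * S) ≤ (8/(N:ℝ)) * (4 * S) := by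
    have hAS : A * S ≤ 4 * S := mul_le_mul_of_nonneg_right hA4 hS0
    exact mul_le_mul hT8 hAS (mul_nonneg hA0 hS0) (by positivity)
  have b3 : A * (T * S) ≤ 4 * ((8/(N:ℝ)) * S) := by
    have hTS : T * S ≤ (8/(N:ℝ)) * S := mul_le_mul_of_nonneg_right hT8 hS0
    exact mul_le_mul hA4 hTS (mul_nonneg hT0 hS0) (by norm_num)
  have hrw : (8/(N:ℝ)) * (4 * S) = 32 * (S / N) := by field_simp; ring
  have hrw2 : 4 * ((8/(N:ℝ)) * S) = 32 * (S / N) := by field_simp; ring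
  calc ∑' jp : {j : ℤ // j ≠ 0} × {p : ℤ // p ≠ 0},
        (1 / ((jp.1 : ℤ) : ℝ) ^ 2) * (1 / ((jp.2 : ℤ) : ℝ) ^ 2) *
          ∑' n : {n : ℤ // (N : ℤ) < |n|},
            (r (2 * (n : ℤ) - (jp.1 : ℤ) - (jp.2 : ℤ))) ^ 2
      ≤ (∑' jp, G1 jp) + (∑' jp, G2 jp) + (∑' jp, G3 jp) := by rw [← step2]; exact step1
    _ = A * (A * E) + T * (A * S) + A * (T * S) := by rw [hT1, hT2, hT3]
    _ ≤ 16 * E + 32 * (S / N) + 32 * (S / N) := by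
        linarith [b1, b2, b3, hrw, hrw2]
    _ ≤ 64 * (E + S / N) := by
        have hSN : 0 ≤ S / (N:ℝ) := by positivity
        linarith
end
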